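/- Let φ : [0,∞) → [2,4] be non-decreasing with φ(s) = 2 for s ≤ 1 and φ(s) = 4 for s ≥ 2. Let y₀, θ₀, v₀ ∈ ℝ, h > 0, and y₁ := y₀ + h·v₀·sin(θ₀). Then |y₁|^{φ(|y₁|)} ≤ 32·|y₀|^{φ(|y₀|)} + 8·h⁴·v₀⁴ + θ₀⁴. -/
import Mathlib

lemma aux_pow2_le (φ : ℝ → ℝ)
    (hφrange : ∀ s : ℝ, 0 ≤ s → φ s ∈ Set.Icc (2 : ℝ) 4)
    (hφ2 : ∀ s : ℝ, 0 ≤ s → s ≤ 1 → φ s = 2)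
    (a : ℝ) (ha : 0 ≤ a) : a ^ 2 ≤ a ^ φ a := by
  rcases le_or_gt a 1 with h1 | h1
  · rw [hφ2 a ha h1, Real.rpow_two]
  · calc a ^ 2 = a ^ (2 : ℝ) := (Real.rpow_two a).symm
      _ ≤ a ^ φ a := Real.rpow_le_rpow_of_exponent_le h1.le (hφrange a ha).1

lemma aux_pow4_le (φ : ℝ → ℝ)
    (hφrange : ∀ s : ℝ, 0 ≤ s → φ s ∈ Set.Icc (2 : ℝ) 4)
    (hφ2 : ∀ s : ℝ, 0 ≤ s → s ≤ 1 → φ s = 2)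
    (hφ4 : ∀ s : ℝ, 2 ≤ s → φ s = 4)
    (a : ℝ) (ha : 0 ≤ a) : a ^ 4 ≤ 4 * a ^ φ a := by
  rcases le_or_gt a 1 with h1 | h1
  · rw [hφ2 a ha h1, Real.rpow_two]
    have h4 : a ^ 4 ≤ a ^ 2 := pow_le_pow_of_le_one ha h1 (by norm_num)
    nlinarith [sq_nonneg a]
  · rcases le_or_gt a 2 with h2 | h2
    · have hA : a ^ 2 ≤ a ^ φ a := aux_pow2_le φ hφrange hφ2 a ha
      have hsq : a ^ 2 ≤ 4 := by nlinarith
      have hprod : 0 ≤ a ^ 2 * (4 - a ^ 2) :=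
        mul_nonneg (sq_nonneg a) (by linarith)
      nlinarith [hA, hprod]
    · rw [hφ4 a h2.le]
      have h4eq : a ^ (4 : ℝ) = a ^ 4 := by
        rw [show (4:ℝ) = ((4:ℕ):ℝ) by norm_num, Real.rpow_natCast]
      rw [h4eq]
      nlinarith [pow_nonneg ha 4]

lemma aux_abs_pow4 (x : ℝ) : |x| ^ 4 = x ^ 4 := by
  rw [show 4 = 2 * 2 from rfl, pow_mul, sq_abs, ← pow_mul]

lemma aux_add_pow4 (x y : ℝ) :
    (x + y) ^ 4 ≤ 8 * x ^ 4 + 8 * y ^ 4 := by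
  have h1 : (x + y) ^ 2 ≤ 2 * x ^ 2 + 2 * y ^ 2 := by nlinarith [sq_nonneg (x - y)]
  have h2 : (x + y) ^ 4 ≤ (2 * x ^ 2 + 2 * y ^ 2) ^ 2 := by
    calc (x + y) ^ 4 = ((x + y) ^ 2) ^ 2 := by ring
      _ ≤ (2 * x ^ 2 + 2 * y ^ 2) ^ 2 := pow_le_pow_left₀ (sq_nonneg _) h1 2
  nlinarith [sq_nonneg (x ^ 2 - y ^ 2), h2]

/-- bound on `|y₁|^(φ(|y₁|))` after one step. -/
theorem one_step_interpolated_power_bound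
    (φ : ℝ → ℝ) (hφmono : ∀ s t : ℝ, 0 ≤ s → s ≤ t → φ s ≤ φ t)
    (hφrange : ∀ s : ℝ, 0 ≤ s → φ s ∈ Set.Icc (2 : ℝ) 4)
    (hφ2 : ∀ s : ℝ, 0 ≤ s → s ≤ 1 → φ s = 2)
    (hφ4 : ∀ s : ℝ, 2 ≤ s → φ s = 4)
    (y₀ θ₀ v₀ h : ℝ) (hh : 0 < h)
    (y₁ : ℝ) (hy₁ : y₁ = y₀ + h * v₀ * Real.sin θ₀) :
    |y₁| ^ φ |y₁| ≤ 32 * |y₀| ^ φ |y₀| + 8 * h ^ 4 * v₀ ^ 4 + θ₀ ^ 4 := by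
  set S := |y₁| with hS
  set A := |y₀| with hA
  set B := |h * v₀ * Real.sin θ₀| with hB
  have hS0 : (0:ℝ) ≤ S := abs_nonneg _
  have hA0 : (0:ℝ) ≤ A := abs_nonneg _
  have hB0 : (0:ℝ) ≤ B := abs_nonneg _
  have htri : S ≤ A + B := by rw [hS, hy₁]; exact abs_add_le _ _
  have hsin1 : |Real.sin θ₀| ≤ 1 := Real.abs_sin_le_one θ₀
  have hsin2 : |Real.sin θ₀| ≤ |θ₀| := Real.abs_sin_le_abs
  have hBeq : B = h * |v₀| * |Real.sin θ₀| := by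
    rw [hB, abs_mul, abs_mul, abs_of_pos hh]
  have hB1 : B ≤ h * |v₀| := by
    rw [hBeq]
    exact mul_le_of_le_one_right (mul_nonneg hh.le (abs_nonneg v₀)) hsin1
  have hB2 : B ≤ h * |v₀| * |θ₀| := by
    rw [hBeq]
    exact mul_le_mul_of_nonneg_left hsin2 (mul_nonneg hh.le (abs_nonneg v₀))
  have hv4 : (h * |v₀|) ^ 4 = h ^ 4 * v₀ ^ 4 := by
    rw [mul_pow, aux_abs_pow4]
  have hθ4 : |θ₀| ^ 4 = θ₀ ^ 4 := aux_abs_pow4 θ₀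
  have hA2 : A ^ 2 ≤ A ^ φ A := aux_pow2_le φ hφrange hφ2 A hA0
  have hA4 : A ^ 4 ≤ 4 * A ^ φ A := aux_pow4_le φ hφrange hφ2 hφ4 A hA0
  have hφA0 : (0:ℝ) ≤ A ^ φ A := Real.rpow_nonneg hA0 _
  have hhv0 : (0:ℝ) ≤ h ^ 4 * v₀ ^ 4 := by positivity
  rcases le_or_gt S 1 with h1 | h1
  · rw [hφ2 S hS0 h1, Real.rpow_two]
    have hs2 : S ^ 2 ≤ (A + B) ^ 2 := by nlinarith
    have hABsq : (A + B) ^ 2 ≤ 2 * A ^ 2 + 2 * B ^ 2 := by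
      nlinarith [sq_nonneg (A - B)]
    have hB2' : B ^ 2 ≤ (h * |v₀|) ^ 2 * |θ₀| ^ 2 := by
      have := mul_self_le_mul_self hB0 hB2
      nlinarith [this]
    have hamgm : 2 * ((h * |v₀|) ^ 2 * |θ₀| ^ 2) ≤ (h * |v₀|) ^ 4 + |θ₀| ^ 4 := by
      nlinarith [sq_nonneg ((h * |v₀|) ^ 2 - |θ₀| ^ 2)]
    rw [hv4, hθ4] at hamgm
    linarith
  · have hle4 : S ^ φ S ≤ S ^ (4:ℝ) :=
      Real.rpow_le_rpow_of_exponent_le h1.le (hφrange S hS0).2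
    have h4eq : S ^ (4:ℝ) = S ^ 4 := by
      rw [show (4:ℝ) = ((4:ℕ):ℝ) by norm_num, Real.rpow_natCast]
    rw [h4eq] at hle4
    have hs4 : S ^ 4 ≤ (A + B) ^ 4 := pow_le_pow_left₀ hS0 htri 4
    have hAB : (A + B) ^ 4 ≤ 8 * A ^ 4 + 8 * B ^ 4 := aux_add_pow4 A B
    have hB4 : B ^ 4 ≤ h ^ 4 * v₀ ^ 4 := by
      rw [← hv4]; exact pow_le_pow_left₀ hB0 hB1 4
    have hθ0 : (0:ℝ) ≤ θ₀ ^ 4 := by positivity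
    linarith
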